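/- For m ≥ 2, the number of Type II subsets of size k of the extended m-ary tree T^+_{m,1} equals m if k = m − 1 and 0 otherwise. (A subset S ⊆ V \ {r'} is Type II if S is not a power dominating set but S ∪ {r'} is.) -/

import Mathlib

/-- The power domination propagation sequence: `pIter G S 0 = N[S]` and
`pIter G S (k+1)` adds every vertex that is the unique unobserved neighbor
of some observed vertex. -/
def pIter {V : Type*} (G : SimpleGraph V) (S : Set V) : ℕ → Set V
  | 0 => {v | v ∈ S ∨ ∃ s ∈ S, G.Adj s v}
  | k + 1 => pIter G S k ∪ {x | ∃ v ∈ pIter G S k, G.neighborSet v \ pIter G S k = {x}}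

/-- The stable limit `P^∞(S)` of the power domination process. -/
def pInf {V : Type*} (G : SimpleGraph V) (S : Set V) : Set V := ⋃ k, pIter G S k

/-- `S` is a power dominating set for `G` if `P^∞(S) = V`. -/
def PowerDominates {V : Type*} (G : SimpleGraph V) (S : Set V) : Prop :=
  pInf G S = Set.univ

/-- The star `T⁺_{m,1}`: center `r = none` adjacent to the stem
`r' = some none` and to the leaves `r_i = some (some i)` for `i : Fin m`. -/
def starG (m : ℕ) : SimpleGraph (Option (Option (Fin m))) :=
  SimpleGraph.fromRel (fun a _ => a = none)

lemma starG_adj (m : ℕ) (a b : Option (Option (Fin m))) :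
    (starG m).Adj a b ↔ a ≠ b ∧ (a = none ∨ b = none) := by
  simp [starG, SimpleGraph.fromRel_adj]

lemma pIter_zero {V : Type*} (G : SimpleGraph V) (S : Set V) :
    pIter G S 0 = {v | v ∈ S ∨ ∃ s ∈ S, G.Adj s v} := rfl

lemma pIter_succ {V : Type*} (G : SimpleGraph V) (S : Set V) (k : ℕ) :
    pIter G S (k+1) = pIter G S k ∪ {x | ∃ v ∈ pIter G S k, G.neighborSet v \ pIter G S k = {x}} := rfl

lemma not_pd (m : ℕ) (S : Set (Option (Option (Fin m)))) (hn : none ∉ S)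
    (a b : Option (Option (Fin m))) (ha : a ≠ none) (hb : b ≠ none)
    (haS : a ∉ S) (hbS : b ∉ S) (hab : a ≠ b) :
    ¬ PowerDominates (starG m) S := by
  have key : ∀ k, a ∉ pIter (starG m) S k ∧ b ∉ pIter (starG m) S k := by
    intro k
    induction k with
    | zero =>
      constructor
      · rintro (h | ⟨s, hs, hadj⟩)
        · exact haS h
        · rcases (starG_adj m s a).mp hadj with ⟨_, (rfl | rfl)⟩
          · exact hn hs
          · exact ha rfl
      · rintro (h | ⟨s, hs, hadj⟩)
        · exact hbS h
        · rcases (starG_adj m s b).mp hadj with ⟨_, (rfl | rfl)⟩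
          · exact hn hs
          · exact hb rfl
    | succ k ih =>
      rw [pIter_succ]
      constructor
      · rintro (h | ⟨v, hv, heq⟩)
        · exact ih.1 h
        · have hav : a ∈ (starG m).neighborSet v := by
            have : a ∈ (starG m).neighborSet v \ pIter (starG m) S k := by rw [heq]; rfl
            exact this.1
          have hvn : v = none := by
            rcases (starG_adj m v a).mp hav with ⟨_, (h1 | h1)⟩
            · exact h1
            · exact absurd h1 ha
          have hbmem : b ∈ (starG m).neighborSet v \ pIter (starG m) S k := by
            refine ⟨?_, ih.2⟩
            rw [SimpleGraph.mem_neighborSet, starG_adj, hvn]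
            exact ⟨fun h => hb h.symm, Or.inl rfl⟩
          rw [heq] at hbmem
          exact hab (hbmem.symm)
      · rintro (h | ⟨v, hv, heq⟩)
        · exact ih.2 h
        · have hbv : b ∈ (starG m).neighborSet v := by
            have : b ∈ (starG m).neighborSet v \ pIter (starG m) S k := by rw [heq]; rfl
            exact this.1
          have hvn : v = none := by
            rcases (starG_adj m v b).mp hbv with ⟨_, (h1 | h1)⟩
            · exact h1
            · exact absurd h1 hb
          have hamem : a ∈ (starG m).neighborSet v \ pIter (starG m) S k := by
            refine ⟨?_, ih.1⟩
            rw [SimpleGraph.mem_neighborSet, starG_adj, hvn]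
            exact ⟨fun h => ha h.symm, Or.inl rfl⟩
          rw [heq] at hamem
          exact hab hamem
  intro h
  have : a ∈ pInf (starG m) S := h ▸ Set.mem_univ a
  obtain ⟨k, hk⟩ := Set.mem_iUnion.mp this
  exact (key k).1 hk

lemma pd_none (m : ℕ) (S : Set (Option (Option (Fin m)))) (h : none ∈ S) :
    PowerDominates (starG m) S := by
  have h0 : pIter (starG m) S 0 = Set.univ := by
    ext x
    simp only [pIter_zero, Set.mem_setOf_eq, Set.mem_univ, iff_true]
    by_cases hx : x = none
    · exact Or.inl (hx ▸ h)
    · exact Or.inr ⟨none, h, (starG_adj m none x).mpr ⟨fun e => hx e.symm, Or.inl rfl⟩⟩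
  refine Set.eq_univ_of_univ_subset ?_
  rw [← h0]
  exact Set.subset_iUnion (pIter (starG m) S) 0

lemma pd_small (m : ℕ) (hm : 2 ≤ m) (S : Set (Option (Option (Fin m)))) (hn : none ∉ S)
    (hsm : ∀ x y : Option (Option (Fin m)), x ≠ none → y ≠ none → x ∉ S → y ∉ S → x = y) :
    PowerDominates (starG m) S := by
  have h01 : (some none : Option (Option (Fin m))) ≠ some (some ⟨0, by omega⟩) := by simp
  have hex : ∃ s ∈ S, s ≠ (none : Option (Option (Fin m))) := by
    by_contra hc
    push_neg at hc
    have h1 : (some none : Option (Option (Fin m))) ∉ S := fun h => by simpa using hc _ h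
    have h2 : (some (some ⟨0, by omega⟩) : Option (Option (Fin m))) ∉ S :=
      fun h => by simpa using hc _ h
    exact h01 (hsm _ _ (by simp) (by simp) h1 h2)
  obtain ⟨s, hs, hsne⟩ := hex
  have h0 : pIter (starG m) S 0 = S ∪ {none} := by
    ext y
    simp only [pIter_zero, Set.mem_setOf_eq, Set.mem_union, Set.mem_singleton_iff]
    constructor
    · rintro (h | ⟨t, ht, hadj⟩)
      · exact Or.inl h
      · rcases (starG_adj m t y).mp hadj with ⟨_, (rfl | rfl)⟩
        · exact absurd ht hn
        · exact Or.inr rfl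
    · rintro (h | rfl)
      · exact Or.inl h
      · exact Or.inr ⟨s, hs, (starG_adj m s none).mpr ⟨hsne, Or.inr rfl⟩⟩
  have h1 : pIter (starG m) S 1 = Set.univ := by
    refine Set.eq_univ_of_forall fun x => ?_
    by_cases hx : x ∈ S ∪ {none}
    · rw [pIter_succ]; exact Or.inl (h0 ▸ hx)
    · simp only [Set.mem_union, Set.mem_singleton_iff, not_or] at hx
      obtain ⟨hxS, hxn⟩ := hx
      rw [pIter_succ]
      right
      refine ⟨none, by rw [h0]; exact Or.inr rfl, ?_⟩
      ext y
      rw [h0]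
      simp only [Set.mem_diff, SimpleGraph.mem_neighborSet, starG_adj, Set.mem_union,
        Set.mem_singleton_iff, not_or]
      constructor
      · rintro ⟨⟨hne, _⟩, hyS, hyn⟩
        exact hsm y x hyn hxn hyS hxS
      · rintro rfl
        exact ⟨⟨fun h => hxn h.symm, Or.inl trivial⟩, hxS, hxn⟩
  refine Set.eq_univ_of_univ_subset ?_
  rw [← h1]
  exact Set.subset_iUnion (pIter (starG m) S) 1

lemma pd_iff (m : ℕ) (hm : 2 ≤ m) (S : Set (Option (Option (Fin m)))) (hn : none ∉ S) :
    PowerDominates (starG m) S ↔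
      ∀ x y : Option (Option (Fin m)), x ≠ none → y ≠ none → x ∉ S → y ∉ S → x = y := by
  constructor
  · intro h x y hx hy hxS hyS
    by_contra hne
    exact not_pd m S hn x y hx hy hxS hyS hne h
  · exact pd_small m hm S hn

/-- For m ≥ 2, the number of Type II subsets of size k of T⁺_{m,1}
(S ⊆ V \ {r'} with S not power dominating but S ∪ {r'} power dominating)
equals m if k = m − 1 and 0 otherwise. -/
theorem stmt7 (m : ℕ) (hm : 2 ≤ m) (k : ℕ) :
    Nat.card {S : Finset (Option (Option (Fin m))) //
        some none ∉ S ∧ S.card = k ∧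
        ¬ PowerDominates (starG m) (↑S : Set (Option (Option (Fin m)))) ∧
        PowerDominates (starG m) ((↑S : Set (Option (Option (Fin m)))) ∪ {some none})} =
      if k = m - 1 then m else 0 := by
  classical
  set L : Fin m → Option (Option (Fin m)) := fun i => some (some i) with hL
  have hLinj : Function.Injective L := fun a b h => by simpa [hL] using h
  set leaves : Finset (Option (Option (Fin m))) := Finset.univ.image L with hleaves
  have hcardleaves : leaves.card = m := by
    rw [hleaves, Finset.card_image_of_injective _ hLinj, Finset.card_univ, Fintype.card_fin]
  -- characterization
  have hchar : ∀ S : Finset (Option (Option (Fin m))),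
      (some none ∉ S ∧ S.card = k ∧
        ¬ PowerDominates (starG m) (↑S : Set (Option (Option (Fin m)))) ∧
        PowerDominates (starG m) ((↑S : Set (Option (Option (Fin m)))) ∪ {some none}))
      ↔ (k = m - 1 ∧ ∃ j : Fin m, S = leaves.erase (L j)) := by
    intro S
    constructor
    · rintro ⟨hstem, hcard, hnpd, hpd⟩
      have hnon : (none : Option (Option (Fin m))) ∉ (S : Set _) := by
        intro h
        exact hnpd (pd_none m _ h)
      have hnon' : (none : Option (Option (Fin m))) ∉ ((S : Set _) ∪ {some none}) := by
        simp only [Set.mem_union, Set.mem_singleton_iff]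
        rintro (h | h)
        · exact hnon h
        · simp [hL] at h
      have hsmall := (pd_iff m hm _ hnon').mp hpd
      have hnsmall := (pd_iff m hm _ hnon).not.mp hnpd
      push_neg at hnsmall
      obtain ⟨x, y, hx, hy, hxS, hyS, hxy⟩ := hnsmall
      -- S ⊆ leaves
      have hsub : S ⊆ leaves := by
        intro v hv
        match v with
        | none => exact absurd hv hnon
        | some none => exact absurd hv hstem
        | some (some i) => exact Finset.mem_image.mpr ⟨i, Finset.mem_univ i, rfl⟩
      -- among x y, one is a leaf not in S
      have hleafmiss : ∃ j : Fin m, L j ∉ S := by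
        match x, hx with
        | some none, _ =>
          match y, hy with
          | some none, _ => exact absurd rfl hxy
          | some (some i), _ => exact ⟨i, fun h => hyS (by exact_mod_cast h)⟩
        | some (some i), _ => exact ⟨i, fun h => hxS (by exact_mod_cast h)⟩
      obtain ⟨j, hj⟩ := hleafmiss
      -- every other leaf is in S
      have hall : ∀ i : Fin m, i ≠ j → L i ∈ S := by
        intro i hij
        by_contra hiS
        have hiS' : L i ∉ ((S : Set _) ∪ {some none}) := by
          simp only [Set.mem_union, Set.mem_singleton_iff, Finset.coe_mem]
          rintro (h | h)
          · exact hiS (by exact_mod_cast h)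
          · simp [hL] at h
        have hjS' : L j ∉ ((S : Set _) ∪ {some none}) := by
          simp only [Set.mem_union, Set.mem_singleton_iff]
          rintro (h | h)
          · exact hj (by exact_mod_cast h)
          · simp [hL] at h
        have := hsmall (L i) (L j) (by simp [hL]) (by simp [hL]) hiS' hjS'
        exact hij (hLinj this)
      have hSeq : S = leaves.erase (L j) := by
        apply Finset.ext
        intro v
        constructor
        · intro hv
          refine Finset.mem_erase.mpr ⟨?_, hsub hv⟩
          rintro rfl
          exact hj hv
        · intro hv
          obtain ⟨hvne, hvl⟩ := Finset.mem_erase.mp hv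
          obtain ⟨i, _, rfl⟩ := Finset.mem_image.mp hvl
          exact hall i (fun h => hvne (by rw [h]))
      refine ⟨?_, j, hSeq⟩
      rw [← hcard, hSeq, Finset.card_erase_of_mem (Finset.mem_image.mpr ⟨j, Finset.mem_univ j, rfl⟩), hcardleaves]
    · rintro ⟨hk, j, rfl⟩
      have hstem : (some none : Option (Option (Fin m))) ∉ leaves.erase (L j) := by
        simp only [Finset.mem_erase, hleaves, Finset.mem_image]
        rintro ⟨-, i, -, h⟩
        simp [hL] at h
      have hnon : (none : Option (Option (Fin m))) ∉ (↑(leaves.erase (L j)) : Set _) := by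
        simp only [Finset.coe_erase, Set.mem_diff, Finset.mem_coe, hleaves, Finset.mem_image]
        rintro ⟨⟨i, -, h⟩, -⟩
        simp [hL] at h
      refine ⟨hstem, ?_, ?_, ?_⟩
      · rw [Finset.card_erase_of_mem (Finset.mem_image.mpr ⟨j, Finset.mem_univ j, rfl⟩), hcardleaves, hk]
      · refine not_pd m _ hnon (some none) (L j) (by simp) (by simp [hL]) ?_ ?_ (by simp [hL])
        · exact_mod_cast hstem
        · simp
      · apply pd_small m hm
        · simp only [Set.mem_union, Set.mem_singleton_iff]
          rintro (h | h)
          · exact hnon h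
          · simp [hL] at h
        · intro x y hx hy hxS hyS
          simp only [Set.mem_union, Set.mem_singleton_iff, not_or, Finset.mem_coe] at hxS hyS
          have hx' : x = L j := by
            match x, hx, hxS with
            | some none, _, hxS => exact absurd rfl hxS.2
            | some (some i), _, hxS =>
              by_contra hne
              exact hxS.1 (Finset.mem_erase.mpr ⟨hne, Finset.mem_image.mpr ⟨i, Finset.mem_univ i, rfl⟩⟩)
          have hy' : y = L j := by
            match y, hy, hyS with
            | some none, _, hyS => exact absurd rfl hyS.2
            | some (some i), _, hyS =>
              by_contra hne
              exact hyS.1 (Finset.mem_erase.mpr ⟨hne, Finset.mem_image.mpr ⟨i, Finset.mem_univ i, rfl⟩⟩)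
          rw [hx', hy']
  by_cases hk : k = m - 1
  · rw [if_pos hk]
    have hbij : Function.Bijective (fun j : Fin m =>
        (⟨leaves.erase (L j), (hchar _).mpr ⟨hk, j, rfl⟩⟩ :
          {S : Finset (Option (Option (Fin m))) //
            some none ∉ S ∧ S.card = k ∧
            ¬ PowerDominates (starG m) (↑S : Set (Option (Option (Fin m)))) ∧
            PowerDominates (starG m) ((↑S : Set (Option (Option (Fin m)))) ∪ {some none})})) := by
      constructor
      · intro a b hab
        simp only [Subtype.mk.injEq] at hab
        by_contra hne
        have hmem : L b ∈ leaves.erase (L a) :=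
          Finset.mem_erase.mpr ⟨fun h => hne (hLinj h).symm,
            Finset.mem_image.mpr ⟨b, Finset.mem_univ b, rfl⟩⟩
        rw [hab] at hmem
        exact (Finset.mem_erase.mp hmem).1 rfl
      · rintro ⟨S, hS⟩
        obtain ⟨-, j, rfl⟩ := (hchar S).mp hS
        exact ⟨j, rfl⟩
    have := Nat.card_eq_of_bijective _ hbij
    rw [Nat.card_eq_fintype_card, Fintype.card_fin] at this
    omega
  · rw [if_neg hk]
    rw [Nat.card_eq_zero]
    left
    refine ⟨fun ⟨S, hS⟩ => ?_⟩
    exact hk ((hchar S).mp hS).1
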